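/- If G is a finite simple graph with matching number at most ν and Δ(G) ≤ Δ, then e(G) ≤ Δν + ν. -/

import Mathlib

set_option linter.unusedSectionVars false

/-- `M` is a matching in `G`: a set of edges of `G` that are pairwise vertex-disjoint. -/
def IsMatchingSet {V : Type*} (G : SimpleGraph V) (M : Finset (Sym2 V)) : Prop :=
  (↑M : Set (Sym2 V)) ⊆ G.edgeSet ∧
    ∀ e ∈ M, ∀ f ∈ M, e ≠ f → ∀ v : V, v ∈ e → v ∉ f

namespace AltProof

variable {V : Type*} [DecidableEq V] {G : SimpleGraph V}

/-- covered -/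
def Cov (M : Finset (Sym2 V)) (v : V) : Prop := ∃ e ∈ M, v ∈ e

lemma subset_matching {M N : Finset (Sym2 V)} (h : IsMatchingSet G M) (hs : N ⊆ M) :
    IsMatchingSet G N :=
  ⟨fun e he => h.1 (hs he), fun e he f hf hef v hv => h.2 e (hs he) f (hs hf) hef v hv⟩

lemma unique_edge {M : Finset (Sym2 V)} (h : IsMatchingSet G M) {e f : Sym2 V} {v : V}
    (he : e ∈ M) (hf : f ∈ M) (hv : v ∈ e) (hv' : v ∈ f) : e = f := by
  by_contra hne
  exact h.2 e he f hf hne v hv hv'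

lemma insert_matching {M : Finset (Sym2 V)} (h : IsMatchingSet G M) {x y : V}
    (hxy : G.Adj x y) (hx : ∀ e ∈ M, x ∉ e) (hy : ∀ e ∈ M, y ∉ e) :
    IsMatchingSet G (insert s(x,y) M) := by
  constructor
  · intro e he
    rcases Finset.mem_insert.1 he with rfl | he
    · exact hxy
    · exact h.1 he
  · intro e he f hf hef v hv hv'
    rcases Finset.mem_insert.1 he with rfl | he1 <;> rcases Finset.mem_insert.1 hf with rfl | hf1
    · exact hef rfl
    · rcases Sym2.mem_iff.1 hv with rfl | rfl
      · exact hx f hf1 hv'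
      · exact hy f hf1 hv'
    · rcases Sym2.mem_iff.1 hv' with rfl | rfl
      · exact hx e he1 hv
      · exact hy e he1 hv
    · exact h.2 e he1 f hf1 hef v hv hv'

/-- The core alternating-surgery lemma, by induction on `M.card`. -/
lemma alt : ∀ (n : ℕ) (M N : Finset (Sym2 V)), M.card ≤ n →
    IsMatchingSet G M → IsMatchingSet G N → ∀ t : V,
    Cov M t → ¬ Cov N t →
    (∃ K : Finset (Sym2 V), IsMatchingSet G K ∧ K.card = N.card + 1 ∧
      ∀ z : V, ¬ Cov M z → ¬ Cov N z → ¬ Cov K z) ∨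
    (∃ (M' : Finset (Sym2 V)) (y : V), IsMatchingSet G M' ∧ M'.card = M.card ∧
      ¬ Cov M y ∧ Cov N y ∧ ∀ z : V, Cov M' z ↔ ((Cov M z ∧ z ≠ t) ∨ z = y)) := by
  intro n
  induction n with
  | zero =>
    intro M N hc hM hN t htM htN
    obtain ⟨e, he, -⟩ := htM
    exact absurd (Finset.card_pos.2 ⟨e, he⟩) (by omega)
  | succ n ih =>
    intro M N hc hM hN t htM htN
    obtain ⟨e₀, he₀, hte₀⟩ := htM
    obtain ⟨a, rfl⟩ := Sym2.mem_iff_exists.1 hte₀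
    have hadj : G.Adj t a := hM.1 he₀
    have hta : t ≠ a := hadj.ne
    -- does `a` have an N-edge?
    by_cases haN : Cov N a
    · obtain ⟨f₀, hf₀, haf₀⟩ := haN
      obtain ⟨b, rfl⟩ := Sym2.mem_iff_exists.1 haf₀
      have hab : a ≠ b := (hN.1 hf₀).ne
      have hbt : b ≠ t := by
        rintro rfl
        exact htN ⟨_, hf₀, Sym2.mem_mk_right _ _⟩
      -- t has no other M-edge, a has no other M-edge / N-edge; b has no other N-edge
      have ht_only : ∀ g ∈ M, g ≠ s(t,a) → t ∉ g := fun g hg hne hv =>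
        hM.2 s(t,a) he₀ g hg (Ne.symm hne) t (Sym2.mem_mk_left _ _) hv
      have ha_only : ∀ g ∈ M, g ≠ s(t,a) → a ∉ g := fun g hg hne hv =>
        hM.2 s(t,a) he₀ g hg (Ne.symm hne) a (Sym2.mem_mk_right _ _) hv
      have haN_only : ∀ g ∈ N, g ≠ s(a,b) → a ∉ g := fun g hg hne hv =>
        hN.2 s(a,b) hf₀ g hg (Ne.symm hne) a (Sym2.mem_mk_left _ _) hv
      have hbN_only : ∀ g ∈ N, g ≠ s(a,b) → b ∉ g := fun g hg hne hv =>
        hN.2 s(a,b) hf₀ g hg (Ne.symm hne) b (Sym2.mem_mk_right _ _) hv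
      by_cases hbM : Cov M b
      · -- recursive case
        obtain ⟨g₀, hg₀, hbg₀⟩ := hbM
        have hg₀ne : g₀ ≠ s(t,a) := by
          rintro rfl
          rcases Sym2.mem_iff.1 hbg₀ with rfl | rfl
          · exact hbt rfl
          · exact hab rfl
        set M₁ := M.erase s(t,a) with hM₁
        set N₁ := N.erase s(a,b) with hN₁
        have hM₁m : IsMatchingSet G M₁ := subset_matching hM (Finset.erase_subset _ _)
        have hN₁m : IsMatchingSet G N₁ := subset_matching hN (Finset.erase_subset _ _)
        have hM₁c : M₁.card ≤ n := by
          have h1 : M₁.card = M.card - 1 := by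
            rw [hM₁]; exact Finset.card_erase_of_mem he₀
          have h2 : 0 < M.card := Finset.card_pos.2 ⟨_, he₀⟩
          omega
        have hbM₁ : Cov M₁ b := ⟨g₀, Finset.mem_erase.2 ⟨hg₀ne, hg₀⟩, hbg₀⟩
        have hbN₁ : ¬ Cov N₁ b := by
          rintro ⟨g, hg, hbg⟩
          exact hbN_only g (Finset.mem_of_mem_erase hg) (Finset.ne_of_mem_erase hg) hbg
        -- key non-coverage facts
        have htM₁ : ¬ Cov M₁ t := by
          rintro ⟨g, hg, hvg⟩
          exact ht_only g (Finset.mem_of_mem_erase hg) (Finset.ne_of_mem_erase hg) hvg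
        have haM₁ : ¬ Cov M₁ a := by
          rintro ⟨g, hg, hvg⟩
          exact ha_only g (Finset.mem_of_mem_erase hg) (Finset.ne_of_mem_erase hg) hvg
        have htN₁ : ¬ Cov N₁ t := fun ⟨g, hg, hvg⟩ => htN ⟨g, Finset.mem_of_mem_erase hg, hvg⟩
        have haN₁ : ¬ Cov N₁ a := by
          rintro ⟨g, hg, hvg⟩
          exact haN_only g (Finset.mem_of_mem_erase hg) (Finset.ne_of_mem_erase hg) hvg
        have hCovM : ∀ z, Cov M z ↔ (z = t ∨ z = a) ∨ Cov M₁ z := by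
          intro z
          constructor
          · rintro ⟨g, hg, hzg⟩
            by_cases hge : g = s(t,a)
            · subst hge; left; exact Sym2.mem_iff.1 hzg
            · exact Or.inr ⟨g, Finset.mem_erase.2 ⟨hge, hg⟩, hzg⟩
          · rintro ((rfl | rfl) | ⟨g, hg, hzg⟩)
            · exact ⟨_, he₀, Sym2.mem_mk_left _ _⟩
            · exact ⟨_, he₀, Sym2.mem_mk_right _ _⟩
            · exact ⟨g, Finset.mem_of_mem_erase hg, hzg⟩
        rcases ih M₁ N₁ hM₁c hM₁m hN₁m b hbM₁ hbN₁ with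
          ⟨K₁, hK₁m, hK₁c, hK₁avoid⟩ | ⟨M₁', y₁, hM₁'m, hM₁'c, hy₁M, hy₁N, hcov⟩
        · -- lift augmenting case: K := insert s(t,a) K₁
          left
          have htK₁ : ∀ e ∈ K₁, t ∉ e := by
            intro e he hv
            exact hK₁avoid t htM₁ htN₁ ⟨e, he, hv⟩
          have haK₁ : ∀ e ∈ K₁, a ∉ e := by
            intro e he hv
            exact hK₁avoid a haM₁ haN₁ ⟨e, he, hv⟩
          refine ⟨insert s(t,a) K₁, insert_matching hK₁m hadj htK₁ haK₁, ?_, ?_⟩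
          · rw [Finset.card_insert_of_notMem (fun h => htK₁ _ h (Sym2.mem_mk_left _ _))]
            rw [hK₁c, hN₁, Finset.card_erase_of_mem hf₀]
            have : 0 < N.card := Finset.card_pos.2 ⟨_, hf₀⟩
            omega
          · rintro z hzM hzN ⟨g, hg, hzg⟩
            rcases Finset.mem_insert.1 hg with rfl | hg
            · rcases Sym2.mem_iff.1 hzg with rfl | rfl
              · exact hzM ⟨_, he₀, Sym2.mem_mk_left _ _⟩
              · exact hzM ⟨_, he₀, Sym2.mem_mk_right _ _⟩
            · refine hK₁avoid z (fun h => hzM ((hCovM z).2 (Or.inr h))) ?_ ⟨g, hg, hzg⟩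
              rintro ⟨g', hg', hzg'⟩
              exact hzN ⟨g', Finset.mem_of_mem_erase hg', hzg'⟩
        · -- lift swap case: M' := insert s(a,b) M₁'
          right
          have hy₁t : y₁ ≠ t := by rintro rfl; exact htN₁ hy₁N
          have hy₁a : y₁ ≠ a := by rintro rfl; exact haN₁ hy₁N
          have hy₁b : y₁ ≠ b := by rintro rfl; exact hbN₁ hy₁N
          have haM₁' : ¬ Cov M₁' a := by
            intro h
            rcases (hcov a).1 h with ⟨h1, -⟩ | h2
            · exact haM₁ h1
            · exact hy₁a h2.symm
          have hbM₁' : ¬ Cov M₁' b := by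
            intro h
            rcases (hcov b).1 h with ⟨-, h1⟩ | h2
            · exact h1 rfl
            · exact hy₁b h2.symm
          have hadj' : G.Adj a b := hN.1 hf₀
          refine ⟨insert s(a,b) M₁', y₁,
            insert_matching hM₁'m hadj' (fun e he hv => haM₁' ⟨e, he, hv⟩)
              (fun e he hv => hbM₁' ⟨e, he, hv⟩), ?_, ?_, ?_, ?_⟩
          · rw [Finset.card_insert_of_notMem
              (fun h => haM₁' ⟨_, h, Sym2.mem_mk_left _ _⟩), hM₁'c, hM₁,
              Finset.card_erase_of_mem he₀]
            have : 0 < M.card := Finset.card_pos.2 ⟨_, he₀⟩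
            omega
          · intro hy
            rcases (hCovM y₁).1 hy with (rfl | rfl) | h
            · exact hy₁t rfl
            · exact hy₁a rfl
            · exact hy₁M h
          · obtain ⟨g, hg, hvg⟩ := hy₁N
            exact ⟨g, Finset.mem_of_mem_erase hg, hvg⟩
          · intro z
            constructor
            · rintro ⟨g, hg, hzg⟩
              rcases Finset.mem_insert.1 hg with rfl | hg
              · rcases Sym2.mem_iff.1 hzg with rfl | rfl
                · refine Or.inl ⟨(hCovM z).2 (Or.inl (Or.inr rfl)), hta.symm⟩
                · refine Or.inl ⟨⟨g₀, hg₀, hbg₀⟩, hbt⟩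
              · rcases (hcov z).1 ⟨g, hg, hzg⟩ with ⟨hz, hzb⟩ | rfl
                · refine Or.inl ⟨(hCovM z).2 (Or.inr hz), ?_⟩
                  rintro rfl
                  exact htM₁ hz
                · exact Or.inr rfl
            · rintro (⟨⟨g, hg, hzg⟩, hzt⟩ | rfl)
              · by_cases hge : g = s(t,a)
                · subst hge
                  rcases Sym2.mem_iff.1 hzg with rfl | rfl
                  · exact absurd rfl hzt
                  · exact ⟨_, Finset.mem_insert_self _ _, Sym2.mem_mk_left _ _⟩
                · have hzM₁ : Cov M₁ z := ⟨g, Finset.mem_erase.2 ⟨hge, hg⟩, hzg⟩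
                  by_cases hzb : z = b
                  · subst hzb
                    exact ⟨_, Finset.mem_insert_self _ _, Sym2.mem_mk_right _ _⟩
                  · obtain ⟨g', hg', hzg'⟩ := (hcov z).2 (Or.inl ⟨hzM₁, hzb⟩)
                    exact ⟨g', Finset.mem_insert_of_mem hg', hzg'⟩
              · obtain ⟨g', hg', hzg'⟩ := (hcov z).2 (Or.inr rfl)
                exact ⟨g', Finset.mem_insert_of_mem hg', hzg'⟩
      · -- base swap case: M' := insert s(a,b) (M.erase s(t,a)), y := b
        right
        have hadj' : G.Adj a b := hN.1 hf₀
        have ha_e : ∀ g ∈ M.erase s(t,a), a ∉ g := fun g hg =>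
          ha_only g (Finset.mem_of_mem_erase hg) (Finset.ne_of_mem_erase hg)
        have hb_e : ∀ g ∈ M.erase s(t,a), b ∉ g := fun g hg hv =>
          hbM ⟨g, Finset.mem_of_mem_erase hg, hv⟩
        refine ⟨insert s(a,b) (M.erase s(t,a)), b,
          insert_matching (subset_matching hM (Finset.erase_subset _ _)) hadj' ha_e hb_e,
          ?_, hbM, ⟨_, hf₀, Sym2.mem_mk_right _ _⟩, ?_⟩
        · rw [Finset.card_insert_of_notMem
            (fun h => ha_e _ h (Sym2.mem_mk_left _ _)), Finset.card_erase_of_mem he₀]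
          have : 0 < M.card := Finset.card_pos.2 ⟨_, he₀⟩
          omega
        · intro z
          constructor
          · rintro ⟨g, hg, hzg⟩
            rcases Finset.mem_insert.1 hg with rfl | hg
            · rcases Sym2.mem_iff.1 hzg with rfl | rfl
              · exact Or.inl ⟨⟨_, he₀, Sym2.mem_mk_right _ _⟩, hta.symm⟩
              · exact Or.inr rfl
            · refine Or.inl ⟨⟨g, Finset.mem_of_mem_erase hg, hzg⟩, ?_⟩
              rintro rfl
              exact ht_only g (Finset.mem_of_mem_erase hg) (Finset.ne_of_mem_erase hg) hzg
          · rintro (⟨⟨g, hg, hzg⟩, hzt⟩ | rfl)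
            · by_cases hge : g = s(t,a)
              · subst hge
                rcases Sym2.mem_iff.1 hzg with rfl | rfl
                · exact absurd rfl hzt
                · exact ⟨_, Finset.mem_insert_self _ _, Sym2.mem_mk_left _ _⟩
              · exact ⟨g, Finset.mem_insert_of_mem (Finset.mem_erase.2 ⟨hge, hg⟩), hzg⟩
            · exact ⟨_, Finset.mem_insert_self _ _, Sym2.mem_mk_right _ _⟩
    · -- augmenting base case: K := insert s(t,a) N
      left
      have htn : ∀ e ∈ N, t ∉ e := fun e he hv => htN ⟨e, he, hv⟩
      have han : ∀ e ∈ N, a ∉ e := fun e he hv => haN ⟨e, he, hv⟩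
      refine ⟨insert s(t,a) N, insert_matching hN hadj htn han, ?_, ?_⟩
      · rw [Finset.card_insert_of_notMem (fun h => htn _ h (Sym2.mem_mk_left _ _))]
      · rintro z hzM hzN ⟨g, hg, hzg⟩
        rcases Finset.mem_insert.1 hg with rfl | hg
        · rcases Sym2.mem_iff.1 hzg with rfl | rfl
          · exact hzM ⟨_, he₀, Sym2.mem_mk_left _ _⟩
          · exact hzM ⟨_, he₀, Sym2.mem_mk_right _ _⟩
        · exact hzN ⟨g, hg, hzg⟩

lemma cov_insert_card {M : Finset (Sym2 V)} {x y : V}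
    (hx : ∀ e ∈ M, x ∉ e) :
    (insert s(x,y) M).card = M.card + 1 :=
  Finset.card_insert_of_notMem (fun h => hx _ h (Sym2.mem_mk_left _ _))

lemma gallai (ν : ℕ)
    (hmatch : ∀ M : Finset (Sym2 V), IsMatchingSet G M → M.card ≤ ν)
    (hB : ∀ v : V, ∃ M, IsMatchingSet G M ∧ M.card = ν ∧ ¬ Cov M v) :
    ∀ (M : Finset (Sym2 V)), IsMatchingSet G M → M.card = ν →
      ∀ u w : V, u ≠ w → ¬ Cov M u → ¬ Cov M w → ¬ G.Reachable u w := by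
  suffices h : ∀ d : ℕ, ∀ (M : Finset (Sym2 V)), IsMatchingSet G M → M.card = ν →
      ∀ u w : V, u ≠ w → ¬ Cov M u → ¬ Cov M w → G.Reachable u w → G.dist u w ≤ d → False by
    intro M hM hMc u w huw hu hw hr
    exact h (G.dist u w) M hM hMc u w huw hu hw hr le_rfl
  intro d
  induction d with
  | zero =>
    intro M hM hMc u w huw hu hw hr hd
    have : G.dist u w = 0 := Nat.le_zero.1 hd
    rcases SimpleGraph.dist_eq_zero_iff_eq_or_not_reachable.1 this with rfl | h
    · exact huw rfl
    · exact h hr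
  | succ d ih =>
    intro M hM hMc u w huw hu hw hr hd
    by_cases hadj : G.Adj u w
    · -- extend the matching
      have := hmatch _ (insert_matching hM hadj (fun e he hv => hu ⟨e, he, hv⟩)
        (fun e he hv => hw ⟨e, he, hv⟩))
      rw [cov_insert_card (fun e he hv => hu ⟨e, he, hv⟩), hMc] at this
      omega
    · have hdist2 : 2 ≤ G.dist u w := by
        have h0 : G.dist u w ≠ 0 :=
          SimpleGraph.dist_ne_zero_iff_ne_and_reachable.2 ⟨huw, hr⟩
        have h1 : G.dist u w ≠ 1 := fun h => hadj (SimpleGraph.dist_eq_one_iff_adj.1 h)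
        omega
      obtain ⟨p, hp⟩ := hr.exists_walk_length_eq_dist
      cases p with
      | nil => exact absurd rfl huw
      | @cons _ t _ hut q =>
        have hqlen : q.length = G.dist u w - 1 := by
          simp [SimpleGraph.Walk.length_cons] at hp; omega
        have hdtw : G.dist t w ≤ d := by
          have := SimpleGraph.dist_le q
          omega
        have hut' : u ≠ t := hut.ne
        have hdut : G.dist u t ≤ 1 := SimpleGraph.dist_le (hut.toWalk)
        have htw : t ≠ w := by
          rintro rfl
          exact hadj hut
        by_cases htM : Cov M t
        · obtain ⟨N, hN, hNc, htN⟩ := hB t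
          rcases alt M.card M N le_rfl hM hN t htM htN with
            ⟨K, hK, hKc, -⟩ | ⟨M', y, hM'm, hM'c, hyM, -, hcov⟩
          · have := hmatch K hK
            rw [hKc, hNc] at this
            omega
          · have hty : t ≠ y := fun h => hyM (h ▸ htM)
            have htM' : ¬ Cov M' t := by
              rw [hcov]
              rintro (⟨-, h⟩ | h)
              · exact h rfl
              · exact hty h
            by_cases hyu : y = u
            · subst hyu
              have hwM' : ¬ Cov M' w := by
                rw [hcov]
                rintro (⟨h, -⟩ | h)
                · exact hw h
                · exact huw h.symm
              exact ih M' hM'm (hM'c.trans hMc) t w htw htM' hwM' q.reachable hdtw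
            · have huM' : ¬ Cov M' u := by
                rw [hcov]
                rintro (⟨h, -⟩ | h)
                · exact hu h
                · exact hyu h.symm
              exact ih M' hM'm (hM'c.trans hMc) u t hut' huM' htM' hut.reachable
                (by omega)
        · -- t and u both exposed and adjacent
          have := hmatch _ (insert_matching hM hut (fun e he hv => hu ⟨e, he, hv⟩)
            (fun e he hv => htM ⟨e, he, hv⟩))
          rw [cov_insert_card (fun e he hv => hu ⟨e, he, hv⟩), hMc] at this
          omega

lemma arith (E n m Δ : ℕ) (h1 : 2*E ≤ n*Δ) (h2 : 2*E ≤ n*(n-1)) (h3 : n ≤ 2*m+1) :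
    E ≤ (Δ+1)*m := by
  by_cases h : n ≤ 2*m
  · have h4 : n*Δ ≤ 2*m*Δ := Nat.mul_le_mul_right _ h
    have h5 : 2*m*Δ = 2*(m*Δ) := by ring
    have h6 : (Δ+1)*m = m*Δ + m := by ring
    omega
  · have hn : n = 2*m+1 := by omega
    by_cases hΔ : Δ ≤ 2*m
    · have h4 : n*Δ = 2*(m*Δ) + Δ := by subst hn; ring
      have h6 : (Δ+1)*m = m*Δ + m := by ring
      omega
    · have h4 : n*(n-1) = 2*(m*(2*m)) + 2*m := by subst hn; simp; ring
      have h5 : m*(2*m) ≤ m*Δ := Nat.mul_le_mul_left _ (by omega)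
      have h6 : (Δ+1)*m = m*Δ + m := by ring
      omega

lemma mk_eq_of_mem_edge {e : Sym2 V} {x y : V} (he : e ∈ G.edgeSet) (hx : x ∈ e)
    (hy : y ∈ e) : G.connectedComponentMk x = G.connectedComponentMk y := by
  induction e with
  | _ p q =>
    have hadj : G.Adj p q := he
    have h := SimpleGraph.ConnectedComponent.connectedComponentMk_eq_of_adj (G:=G) hadj
    rcases Sym2.mem_iff.1 hx with rfl | rfl <;> rcases Sym2.mem_iff.1 hy with rfl | rfl
    · rfl
    · exact h
    · exact h.symm
    · rfl

lemma edge_verts_card_le (e : Sym2 V) [Fintype V] :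
    (Finset.univ.filter (· ∈ e)).card ≤ 2 := by
  induction e with
  | _ p q =>
    have hsub : Finset.univ.filter (· ∈ s(p,q)) ⊆ {p, q} := by
      intro z hz
      rcases Sym2.mem_iff.1 (Finset.mem_filter.1 hz).2 with rfl | rfl
      · exact Finset.mem_insert_self _ _
      · exact Finset.mem_insert_of_mem (Finset.mem_singleton_self _)
    refine (Finset.card_le_card hsub).trans ?_
    refine (Finset.card_insert_le _ _).trans ?_
    simp

lemma count [Fintype V] (M : Finset (Sym2 V)) (hM : IsMatchingSet G M) (Δ : ℕ)
    (hdeg : ∀ v : V, (G.neighborSet v).ncard ≤ Δ)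
    (hexp : ∀ u w : V, u ≠ w → ¬ Cov M u → ¬ Cov M w → ¬ G.Reachable u w) :
    G.edgeSet.ncard ≤ (Δ+1) * M.card := by
  classical
  -- the component of an edge
  set κ : Sym2 V → G.ConnectedComponent := fun e => G.connectedComponentMk e.out.1 with hκ
  have hκ_eq : ∀ e ∈ G.edgeSet, ∀ x ∈ e, κ e = G.connectedComponentMk x := by
    intro e he x hx
    exact mk_eq_of_mem_edge he e.out_fst_mem hx
  have hEcard : G.edgeSet.ncard = G.edgeFinset.card := by
    rw [← SimpleGraph.coe_edgeFinset, Set.ncard_coe_finset]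
  rw [hEcard]
  have hpart : G.edgeFinset.card
      = ∑ c : G.ConnectedComponent, (G.edgeFinset.filter (fun e => κ e = c)).card :=
    Finset.card_eq_sum_card_fiberwise (fun e _ => Finset.mem_univ _)
  have hMpart : M.card = ∑ c : G.ConnectedComponent, (M.filter (fun e => κ e = c)).card :=
    Finset.card_eq_sum_card_fiberwise (fun e _ => Finset.mem_univ _)
  rw [hpart, hMpart, Finset.mul_sum]
  refine Finset.sum_le_sum (fun c _ => ?_)
  -- per-component quantities
  set Sc : Finset V := Finset.univ.filter (fun v => G.connectedComponentMk v = c) with hSc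
  set nc := Sc.card
  set mc := (M.filter (fun e => κ e = c)).card
  -- the component subgraph
  set Gc : SimpleGraph V :=
    { Adj := fun x y => G.Adj x y ∧ G.connectedComponentMk x = c
      symm := by
        constructor
        rintro x y ⟨hxy, hx⟩
        exact ⟨hxy.symm, (SimpleGraph.ConnectedComponent.connectedComponentMk_eq_of_adj (G:=G) hxy).symm.trans hx⟩
      loopless := ⟨fun x h => G.loopless.irrefl x h.1⟩ } with hGc
  have hGcAdj : ∀ x y, Gc.Adj x y ↔ G.Adj x y ∧ G.connectedComponentMk x = c := fun x y =>
    Iff.rfl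
  -- the component's edges are exactly the fiber
  have hEc : G.edgeFinset.filter (fun e => κ e = c) = Gc.edgeFinset := by
    ext e
    induction e with
    | _ p q =>
      simp only [Finset.mem_filter, SimpleGraph.mem_edgeFinset, SimpleGraph.mem_edgeSet]
      constructor
      · rintro ⟨hadj, hc⟩
        exact ⟨hadj, by rw [← hκ_eq _ hadj p (Sym2.mem_mk_left _ _)]; exact hc⟩
      · rintro ⟨hadj, hc⟩
        exact ⟨hadj, by rw [hκ_eq _ hadj p (Sym2.mem_mk_left _ _)]; exact hc⟩
  rw [hEc]
  -- handshake
  have hhs : ∑ v, Gc.degree v = 2 * Gc.edgeFinset.card := Gc.sum_degrees_eq_twice_card_edges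
  -- degrees vanish off Sc
  have hdeg0 : ∀ v ∉ Sc, Gc.degree v = 0 := by
    intro v hv
    rw [hSc] at hv
    simp only [Finset.mem_filter, Finset.mem_univ, true_and] at hv
    have hempty : Gc.neighborFinset v = ∅ := by
      refine Finset.eq_empty_iff_forall_notMem.2 (fun w hw => ?_)
      rw [SimpleGraph.mem_neighborFinset] at hw
      exact hv hw.2
    rw [SimpleGraph.degree, hempty, Finset.card_empty]
  have hsum_restrict : ∑ v, Gc.degree v = ∑ v ∈ Sc, Gc.degree v := by
    rw [← Finset.sum_subset (Finset.subset_univ Sc) (fun v _ hv => hdeg0 v hv)]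
  -- two degree bounds
  have hdegΔ : ∀ v, Gc.degree v ≤ Δ := by
    intro v
    have h1 : (Gc.neighborSet v).ncard = Gc.degree v := by
      rw [Set.ncard_eq_toFinset_card']
      exact congrArg Finset.card (by ext w; simp [SimpleGraph.neighborFinset])
    rw [← h1]
    refine le_trans (Set.ncard_le_ncard ?_ (Set.toFinite _)) (hdeg v)
    intro w hw
    exact hw.1
  have hdegn : ∀ v ∈ Sc, Gc.degree v ≤ nc - 1 := by
    intro v hv
    have : Gc.neighborFinset v ⊆ Sc.erase v := by
      intro w hw
      rw [SimpleGraph.mem_neighborFinset] at hw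
      refine Finset.mem_erase.2 ⟨fun h => Gc.loopless.irrefl v (h ▸ hw), ?_⟩
      rw [hSc]
      simp only [Finset.mem_filter, Finset.mem_univ, true_and]
      rw [← SimpleGraph.ConnectedComponent.connectedComponentMk_eq_of_adj (G:=G) hw.1]
      exact hw.2
    calc Gc.degree v = (Gc.neighborFinset v).card := rfl
      _ ≤ (Sc.erase v).card := Finset.card_le_card this
      _ ≤ nc - 1 := by
          rw [Finset.card_erase_of_mem hv]
  -- nc ≤ 2 mc + 1
  have hcov_sub : Sc ⊆ (M.filter (fun e => κ e = c)).biUnion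
      (fun e => Finset.univ.filter (· ∈ e)) ∪ Sc.filter (fun v => ¬ Cov M v) := by
    intro v hv
    by_cases hcv : Cov M v
    · obtain ⟨g, hg, hvg⟩ := hcv
      refine Finset.mem_union_left _ (Finset.mem_biUnion.2 ⟨g, ?_, ?_⟩)
      · refine Finset.mem_filter.2 ⟨hg, ?_⟩
        rw [hκ_eq g (hM.1 hg) v hvg]
        rw [hSc] at hv
        exact (Finset.mem_filter.1 hv).2
      · exact Finset.mem_filter.2 ⟨Finset.mem_univ _, hvg⟩
    · exact Finset.mem_union_right _ (Finset.mem_filter.2 ⟨hv, hcv⟩)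
  have hexp1 : (Sc.filter (fun v => ¬ Cov M v)).card ≤ 1 := by
    refine Finset.card_le_one.2 (fun u hu w hw => ?_)
    simp only [Finset.mem_filter, hSc, Finset.mem_univ, true_and] at hu hw
    by_contra hne
    exact hexp u w hne hu.2 hw.2 (SimpleGraph.ConnectedComponent.exact (hu.1.trans hw.1.symm))
  have hnc : nc ≤ 2 * mc + 1 := by
    calc nc ≤ ((M.filter (fun e => κ e = c)).biUnion
          (fun e => Finset.univ.filter (· ∈ e))).card + (Sc.filter (fun v => ¬ Cov M v)).card :=
          le_trans (Finset.card_le_card hcov_sub) (Finset.card_union_le _ _)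
      _ ≤ 2 * mc + 1 := by
          refine Nat.add_le_add ?_ hexp1
          refine le_trans (Finset.card_biUnion_le) ?_
          calc ∑ e ∈ M.filter (fun e => κ e = c), (Finset.univ.filter (· ∈ e)).card
              ≤ ∑ _e ∈ M.filter (fun e => κ e = c), 2 :=
                Finset.sum_le_sum (fun e _ => edge_verts_card_le e)
            _ = 2 * mc := by rw [Finset.sum_const, smul_eq_mul, mul_comm]
  -- combine
  refine arith _ nc mc Δ ?_ ?_ hnc
  · rw [← hhs, hsum_restrict]
    calc ∑ v ∈ Sc, Gc.degree v ≤ ∑ _v ∈ Sc, Δ := Finset.sum_le_sum (fun v _ => hdegΔ v)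
      _ = nc * Δ := by rw [Finset.sum_const, smul_eq_mul]
  · rw [← hhs, hsum_restrict]
    calc ∑ v ∈ Sc, Gc.degree v ≤ ∑ _v ∈ Sc, (nc-1) := Finset.sum_le_sum hdegn
      _ = nc * (nc-1) := by rw [Finset.sum_const, smul_eq_mul]

lemma main [Fintype V] (ν Δ : ℕ) (G : SimpleGraph V)
    (hmatch : ∀ M : Finset (Sym2 V), IsMatchingSet G M → M.card ≤ ν)
    (hdeg : ∀ v : V, (G.neighborSet v).ncard ≤ Δ) :
    G.edgeSet.ncard ≤ Δ * ν + ν := by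
  classical
  induction ν generalizing G with
  | zero =>
    have : G.edgeSet = ∅ := by
      refine Set.eq_empty_iff_forall_notMem.2 (fun e he => ?_)
      have hm : IsMatchingSet G {e} := by
        constructor
        · intro f hf
          rw [Finset.coe_singleton, Set.mem_singleton_iff] at hf
          exact hf ▸ he
        · intro f hf g hg hfg
          rw [Finset.mem_singleton] at hf hg
          exact absurd (hf.trans hg.symm) hfg
      have := hmatch {e} hm
      simp at this
    rw [this]
    simp
  | succ ν ih =>
    by_cases hA : ∃ v : V, ∀ M : Finset (Sym2 V), IsMatchingSet G M →
        (∀ e ∈ M, v ∉ e) → M.card ≤ ν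
    · obtain ⟨v, hv⟩ := hA
      set G' := G.deleteEdges {e | v ∈ e} with hG'
      have hle : G' ≤ G := SimpleGraph.deleteEdges_le _
      have hG'edge : G'.edgeSet = G.edgeSet \ {e | v ∈ e} := by
        rw [hG', SimpleGraph.edgeSet_deleteEdges]
      have hmatch' : ∀ M : Finset (Sym2 V), IsMatchingSet G' M → M.card ≤ ν := by
        intro M hM
        refine hv M ⟨fun e he => ?_, hM.2⟩ (fun e he hve => ?_)
        · exact ((hG'edge ▸ hM.1) he).1
        · exact ((hG'edge ▸ hM.1) (Finset.mem_coe.2 he)).2 hve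
      have hdeg' : ∀ u : V, (G'.neighborSet u).ncard ≤ Δ := by
        intro u
        refine le_trans (Set.ncard_le_ncard ?_ (Set.toFinite _)) (hdeg u)
        intro w hw
        exact hle hw
      have hecard : G.edgeFinset.card ≤ G'.edgeFinset.card + Δ := by
        have hsub : G.edgeFinset ⊆ G'.edgeFinset ∪ G.edgeFinset.filter (fun e => v ∈ e) := by
          intro e he
          by_cases hve : v ∈ e
          · exact Finset.mem_union_right _ (Finset.mem_filter.2 ⟨he, hve⟩)
          · refine Finset.mem_union_left _ ?_
            rw [SimpleGraph.mem_edgeFinset, hG'edge]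
            exact ⟨SimpleGraph.mem_edgeFinset.1 he, hve⟩
        have hfil : (G.edgeFinset.filter (fun e => v ∈ e)).card ≤ Δ := by
          have himg : G.edgeFinset.filter (fun e => v ∈ e) ⊆
              (G.neighborSet v).toFinset.image (fun w => s(v, w)) := by
            intro e he
            obtain ⟨he1, he2⟩ := Finset.mem_filter.1 he
            obtain ⟨w, rfl⟩ := Sym2.mem_iff_exists.1 he2
            refine Finset.mem_image.2 ⟨w, ?_, rfl⟩
            rw [Set.mem_toFinset]
            exact (SimpleGraph.mem_edgeSet G).1 (SimpleGraph.mem_edgeFinset.1 he1)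
          refine le_trans (Finset.card_le_card himg) ?_
          refine le_trans Finset.card_image_le ?_
          rw [← Set.ncard_eq_toFinset_card']
          exact hdeg v
        exact le_trans (Finset.card_le_card hsub) (le_trans (Finset.card_union_le _ _)
          (by omega))
      have hih := ih G' hmatch' hdeg'
      have h1 : G.edgeSet.ncard = G.edgeFinset.card := by
        rw [← SimpleGraph.coe_edgeFinset, Set.ncard_coe_finset]
      have h2 : G'.edgeSet.ncard = G'.edgeFinset.card := by
        rw [← SimpleGraph.coe_edgeFinset, Set.ncard_coe_finset]
      rw [h1]
      rw [h2] at hih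
      have : Δ * (ν+1) + (ν+1) = (Δ * ν + ν) + Δ + 1 := by ring
      omega
    · push_neg at hA
      by_cases hV : Nonempty V
      · obtain ⟨v₀⟩ := hV
        have hB : ∀ v : V, ∃ M, IsMatchingSet G M ∧ M.card = ν + 1 ∧ ¬ Cov M v := by
          intro v
          obtain ⟨M, hM1, hM2, hM3⟩ := hA v
          refine ⟨M, hM1, le_antisymm (hmatch M hM1) hM3, ?_⟩
          rintro ⟨e, he, hve⟩
          exact hM2 e he hve
        obtain ⟨M, hMs, hMc, -⟩ := hB v₀
        have hexp := gallai (ν+1) hmatch hB M hMs hMc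
        have := count M hMs Δ hdeg hexp
        rw [hMc] at this
        calc G.edgeSet.ncard ≤ (Δ+1) * (ν+1) := this
          _ = Δ * (ν+1) + (ν+1) := by ring
      · have : G.edgeSet = ∅ := by
          refine Set.eq_empty_iff_forall_notMem.2 (fun e _ => ?_)
          exact hV ⟨e.out.1⟩
        rw [this]
        simp


end AltProof

/-- A graph with matching number at most `ν` and maximum degree at most `Δ`
has at most `Δν + ν` edges. -/
theorem stmt_2 {V : Type*} [Fintype V] [DecidableEq V] (G : SimpleGraph V)
    (ν Δ : ℕ)
    (hmatch : ∀ M : Finset (Sym2 V), IsMatchingSet G M → M.card ≤ ν)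
    (hdeg : ∀ v : V, (G.neighborSet v).ncard ≤ Δ) :
    G.edgeSet.ncard ≤ Δ * ν + ν :=
  AltProof.main ν Δ G hmatch hdeg
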